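/- Let d ≥ 2 and let λ₁, ..., λ_{d-1} ∈ ℂ be such that for every nonempty subset I ⊆ {1,...,d-1}, the sum ∑_{i∈I} λ_i is nonzero. Let P ∈ ℂ[[T]] be a formal power series whose constant term equals λ₁ + λ₂ + ⋯ + λ_{d-1}. Then there exist r₁, r₂, ..., r_{d-1} ∈ ℂ such that P - ∑_{i=1}^{d-1} λ_i · exp(r_i T) is divisible by T^d in ℂ[[T]]. -/

import Mathlib

open MvPolynomial

set_option maxHeartbeats 1000000
set_option synthInstance.maxHeartbeats 400000

noncomputable section AuxPS

variable {n : ℕ}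

/-- weighted power sum polynomials -/
private def wps (l : Fin n → ℂ) (k : Fin n) : MvPolynomial (Fin n) ℂ :=
  ∑ i, MvPolynomial.C (l i) * MvPolynomial.X i ^ ((k : ℕ) + 1)

private lemma eval_wps (l : Fin n → ℂ) (k : Fin n) (x : Fin n → ℂ) :
    eval x (wps l k) = ∑ i, l i * x i ^ ((k : ℕ) + 1) := by
  simp [wps]

private lemma wps_isHomogeneous (l : Fin n → ℂ) (k : Fin n) :
    (wps l k).IsHomogeneous ((k : ℕ) + 1) := by
  apply IsHomogeneous.sum
  intro i _
  exact isHomogeneous_C_mul_X_pow _ _ _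

/-- Vandermonde-type lemma: common zero of the wps is trivial. -/
private lemma vand_zero (l : Fin n → ℂ)
    (hl : ∀ I : Finset (Fin n), I.Nonempty → ∑ i ∈ I, l i ≠ 0)
    (x : Fin n → ℂ) (h : ∀ k : Fin n, ∑ i, l i * x i ^ ((k : ℕ) + 1) = 0) :
    x = 0 := by
  by_contra hx
  have hex : ∃ i₀, x i₀ ≠ 0 := by
    by_contra hc
    push_neg at hc
    exact hx (funext fun i => hc i)
  obtain ⟨i₀, hi₀⟩ := hex
  have hn : 1 ≤ n := Nat.pos_of_ne_zero (fun h0 => (h0 ▸ i₀).elim0)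
  set s := x i₀ with hs
  set V : Finset ℂ := ((Finset.univ.image x).erase s).erase 0 with hV
  set f : Polynomial ℂ := Polynomial.X * ∏ v ∈ V, (Polynomial.X - Polynomial.C v) with hf
  have hprodne : (∏ v ∈ V, (Polynomial.X - Polynomial.C v)) ≠ 0 :=
    Finset.prod_ne_zero_iff.mpr fun v _ => Polynomial.X_sub_C_ne_zero v
  have hdeg : f.natDegree < n + 1 := by
    have h1 : f.natDegree = 1 + V.card := by
      rw [hf, Polynomial.natDegree_mul Polynomial.X_ne_zero hprodne,
        Polynomial.natDegree_X, Polynomial.natDegree_prod _ _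
          (fun v _ => Polynomial.X_sub_C_ne_zero v)]
      simp [Polynomial.natDegree_X_sub_C]
    have h2 : V.card ≤ n - 1 := by
      calc V.card ≤ ((Finset.univ.image x).erase s).card :=
            Finset.card_le_card (Finset.erase_subset _ _)
        _ = (Finset.univ.image x).card - 1 :=
            Finset.card_erase_of_mem (Finset.mem_image.mpr ⟨i₀, Finset.mem_univ _, rfl⟩)
        _ ≤ n - 1 := by
            have := Finset.card_image_le (s := (Finset.univ : Finset (Fin n))) (f := x)
            simp only [Finset.card_univ, Fintype.card_fin] at this
            omega
    omega
  have hcoeff0 : f.coeff 0 = 0 := by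
    rw [Polynomial.coeff_zero_eq_eval_zero, hf]
    simp
  -- the sum identity
  have heval : ∀ y : ℂ, f.eval y = ∑ j ∈ Finset.range (n + 1), f.coeff j * y ^ j := by
    intro y
    rw [Polynomial.eval_eq_sum_range' hdeg]
  have hS0 : ∑ i, l i * f.eval (x i) = 0 := by
    calc ∑ i, l i * f.eval (x i)
        = ∑ i, ∑ j ∈ Finset.range (n + 1), f.coeff j * (l i * x i ^ j) := by
          refine Finset.sum_congr rfl fun i _ => ?_
          rw [heval, Finset.mul_sum]
          exact Finset.sum_congr rfl fun j _ => by ring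
      _ = ∑ j ∈ Finset.range (n + 1), f.coeff j * ∑ i, l i * x i ^ j := by
          rw [Finset.sum_comm]
          exact Finset.sum_congr rfl fun j _ => by rw [Finset.mul_sum]
      _ = 0 := by
          refine Finset.sum_eq_zero fun j hj => ?_
          rcases Nat.eq_zero_or_pos j with rfl | hjpos
          · rw [hcoeff0, zero_mul]
          · have hjn : j - 1 < n := by
              have := Finset.mem_range.mp hj; omega
            have := h ⟨j - 1, hjn⟩
            simp only [Fin.val_mk] at this
            rw [show j - 1 + 1 = j by omega] at this
            rw [this, mul_zero]
  have hevals : f.eval s ≠ 0 := by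
    rw [hf]
    simp only [Polynomial.eval_mul, Polynomial.eval_X, Polynomial.eval_prod,
      Polynomial.eval_sub, Polynomial.eval_C]
    refine mul_ne_zero hi₀ (Finset.prod_ne_zero_iff.mpr fun v hv => ?_)
    have hsV : s ∉ V := by
      intro hsv
      exact Finset.notMem_erase s _ (Finset.mem_of_mem_erase hsv)
    intro hEq
    rw [sub_eq_zero] at hEq
    exact hsV (hEq ▸ hv)
  have hSsplit : ∑ i, l i * f.eval (x i)
      = (∑ i ∈ Finset.univ.filter (fun i => x i = s), l i) * f.eval s := by
    rw [← Finset.sum_filter_add_sum_filter_not Finset.univ (fun i => x i = s), Finset.sum_mul]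
    have h2 : ∑ i ∈ Finset.univ.filter (fun i => ¬ x i = s), l i * f.eval (x i) = 0 := by
      refine Finset.sum_eq_zero fun i hi => ?_
      have hxi : x i ≠ s := (Finset.mem_filter.mp hi).2
      have : f.eval (x i) = 0 := by
        rcases eq_or_ne (x i) 0 with h0 | h0
        · rw [hf]; simp [h0]
        · have hmem : x i ∈ V := by
            rw [hV]
            refine Finset.mem_erase.mpr ⟨h0, Finset.mem_erase.mpr ⟨hxi, ?_⟩⟩
            exact Finset.mem_image.mpr ⟨i, Finset.mem_univ _, rfl⟩
          rw [hf]
          simp only [Polynomial.eval_mul, Polynomial.eval_prod]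
          refine mul_eq_zero_of_right _ (Finset.prod_eq_zero hmem ?_)
          simp
      rw [this, mul_zero]
    rw [h2, add_zero]
    exact Finset.sum_congr rfl fun i hi => by rw [(Finset.mem_filter.mp hi).2]
  have hfilter : (Finset.univ.filter (fun i => x i = s)).Nonempty :=
    ⟨i₀, Finset.mem_filter.mpr ⟨Finset.mem_univ _, rfl⟩⟩
  exact (mul_ne_zero (hl _ hfilter) hevals) (hSsplit ▸ hS0)

/-- chain rule for pderiv of aeval -/
private lemma pderiv_aeval {m : ℕ} (p : Fin m → MvPolynomial (Fin n) ℂ)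
    (F : MvPolynomial (Fin m) ℂ) (i : Fin n) :
    pderiv i (aeval p F) = ∑ k, aeval p (pderiv k F) * pderiv i (p k) := by
  classical
  induction F using MvPolynomial.induction_on with
  | C a => simp
  | add F G hF hG =>
      simp only [map_add, hF, hG, ← Finset.sum_add_distrib]
      exact Finset.sum_congr rfl fun k _ => by rw [add_mul]
  | mul_X F k₀ hF =>
      calc pderiv i (aeval p (F * X k₀))
          = pderiv i (aeval p F * p k₀) := by rw [map_mul, aeval_X]
        _ = pderiv i (aeval p F) * p k₀ + aeval p F * pderiv i (p k₀) := by
            rw [pderiv_mul]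
        _ = (∑ k, aeval p (pderiv k F) * pderiv i (p k)) * p k₀
              + aeval p F * pderiv i (p k₀) := by rw [hF]
        _ = ∑ k, aeval p (pderiv k (F * X k₀)) * pderiv i (p k) := by
            have hterm : ∀ k : Fin m, aeval p (pderiv k (F * X k₀)) * pderiv i (p k)
                = aeval p (pderiv k F) * pderiv i (p k) * p k₀
                  + (if k₀ = k then aeval p F * pderiv i (p k₀) else 0) := by
              intro k
              rw [pderiv_mul, map_add, map_mul, map_mul, aeval_X, pderiv_X]
              by_cases hk : k₀ = k
              · subst hk; simp; ring
              · simp only [Pi.single_apply, if_neg (Ne.symm hk), map_zero, mul_zero,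
                  add_zero, if_neg hk]
                ring
            rw [Finset.sum_congr rfl (fun k _ => hterm k), Finset.sum_add_distrib,
              Finset.sum_ite_eq Finset.univ k₀
                (fun _ => aeval p F * pderiv i (p k₀))]
            simp only [Finset.mem_univ, if_true, Finset.sum_mul]

private lemma totalDegree_pderiv_le {t : ℕ} (i : Fin n) (f : MvPolynomial (Fin n) ℂ)
    (hf : f.totalDegree ≤ t + 1) : (pderiv i f).totalDegree ≤ t := by
  classical
  conv_lhs => rw [f.as_sum]
  rw [map_sum]
  refine le_trans (MvPolynomial.totalDegree_finset_sum _ _) (Finset.sup_le fun m hm => ?_)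
  rw [pderiv_monomial]
  rcases Nat.eq_zero_or_pos (m i) with h0 | hpos
  · simp [h0]
  · refine le_trans (MvPolynomial.totalDegree_monomial_le _ _) ?_
    have hm' : m = (m - Finsupp.single i 1) + Finsupp.single i 1 := by
      ext j
      rw [Finsupp.add_apply, Finsupp.tsub_apply]
      by_cases hj : j = i
      · subst hj
        simp [Finsupp.single_apply]
        omega
      · simp [Finsupp.single_apply, Ne.symm hj]
    have hdegm : (m.sum fun _ e => e) ≤ t + 1 :=
      le_trans (MvPolynomial.le_totalDegree hm) hf
    have hsum : (m.sum fun _ e => e)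
        = ((m - Finsupp.single i 1).sum fun _ e => e) + 1 := by
      conv_lhs => rw [hm']
      rw [Finsupp.sum_add_index' (fun _ => rfl) (fun _ _ _ => rfl),
        Finsupp.sum_single_index rfl]
    simp only [Finsupp.sum, Function.id_def] at hdegm hsum ⊢
    omega

private lemma eq_C_of_pderiv_eq_zero (F : MvPolynomial (Fin n) ℂ)
    (h : ∀ i, pderiv i F = 0) : F = MvPolynomial.C (coeff 0 F) := by
  classical
  ext m
  rw [coeff_C]
  by_cases hm : (0 : Fin n →₀ ℕ) = m
  · rw [if_pos hm, ← hm]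
  · rw [if_neg hm]
    have hex : ∃ i, m i ≠ 0 := by
      by_contra hc
      push_neg at hc
      exact hm (Finsupp.ext fun j => by simpa using (hc j).symm)
    obtain ⟨i, hi⟩ := hex
    by_cases hsupp : m ∈ F.support
    · -- compute coefficient of pderiv i F at m - e_i
      set β := m - Finsupp.single i 1 with hβ
      have hmb : β + Finsupp.single i 1 = m := by
        ext j
        rw [Finsupp.add_apply, hβ, Finsupp.tsub_apply]
        by_cases hj : j = i
        · subst hj
          simp [Finsupp.single_apply]
          omega
        · simp [Finsupp.single_apply, Ne.symm hj]
      have hco : coeff β (pderiv i F) = coeff m F * (m i : ℂ) := by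
        conv_lhs => rw [F.as_sum, map_sum]
        rw [MvPolynomial.coeff_sum]
        rw [Finset.sum_eq_single m]
        · rw [pderiv_monomial, ← hβ, coeff_monomial, if_pos rfl]
        · intro m' hm' hne
          rw [pderiv_monomial, coeff_monomial]
          by_cases hc : m' - Finsupp.single i 1 = β
          · rcases Nat.eq_zero_or_pos (m' i) with h0 | hpos
            · simp [h0]
            · exfalso
              apply hne
              rw [← hmb, ← hc]
              ext j
              rw [Finsupp.add_apply, Finsupp.tsub_apply]
              by_cases hj : j = i
              · subst hj
                simp [Finsupp.single_apply]
                omega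
              · simp [Finsupp.single_apply, Ne.symm hj]
          · rw [if_neg hc]
        · intro hns
          exact absurd hsupp hns
      rw [h i] at hco
      simp only [coeff_zero] at hco
      have : (m i : ℂ) ≠ 0 := Nat.cast_ne_zero.mpr hi
      exact (mul_eq_zero.mp hco.symm).resolve_right this
    · exact MvPolynomial.notMem_support_iff.mp hsupp

private lemma eq_C_of_totalDegree_eq_zero {F : MvPolynomial (Fin n) ℂ}
    (h : F.totalDegree = 0) : F = MvPolynomial.C (coeff 0 F) := by
  classical
  ext m
  rw [coeff_C]
  by_cases hm : (0 : Fin n →₀ ℕ) = m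
  · rw [if_pos hm, ← hm]
  · rw [if_neg hm]
    by_cases hsupp : m ∈ F.support
    · exfalso
      have := (MvPolynomial.totalDegree_eq_zero_iff (Fin n) F).mp h m hsupp
      exact hm (Finsupp.ext fun j => by simpa using (this j).symm)
    · exact MvPolynomial.notMem_support_iff.mp hsupp

/-- algebraic independence of the wps -/
private lemma wps_indep (l : Fin n → ℂ) (hl0 : ∀ i, l i ≠ 0) :
    AlgebraicIndependent ℂ (wps l) := by
  classical
  rw [algebraicIndependent_iff]
  suffices H : ∀ t : ℕ, ∀ F : MvPolynomial (Fin n) ℂ, F.totalDegree ≤ t →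
      aeval (wps l) F = 0 → F = 0 by
    intro F hF
    exact H F.totalDegree F le_rfl hF
  -- derivative of the wps
  have hpd : ∀ (k i0 : Fin n), pderiv i0 (wps l k)
      = MvPolynomial.C (l i0 * ((k : ℕ) + 1)) * X i0 ^ (k : ℕ) := by
    intro k i0
    rw [wps, map_sum, Finset.sum_eq_single_of_mem i0 (Finset.mem_univ i0)]
    · rw [pderiv_C_mul, pderiv_pow, pderiv_X_self, mul_one]
      rw [show ((k : ℕ) + 1) - 1 = (k : ℕ) from rfl]
      simp only [map_mul, map_add, map_natCast, map_one]
      push_cast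
      ring
    · intro i' _ hne
      rw [pderiv_C_mul, pderiv_pow, pderiv_X_of_ne hne, mul_zero, mul_zero]
  -- the jacobian matrix and its determinant
  set W : Matrix (Fin n) (Fin n) (MvPolynomial (Fin n) ℂ) :=
    Matrix.of (fun k i0 : Fin n => (X i0 : MvPolynomial (Fin n) ℂ) ^ (k : ℕ)) with hW
  set M : Matrix (Fin n) (Fin n) (MvPolynomial (Fin n) ℂ) :=
    Matrix.of (fun k i0 : Fin n => pderiv i0 (wps l k)) with hM
  have hdetW : W.det = (Matrix.vandermonde (fun i : Fin n =>
      (X i : MvPolynomial (Fin n) ℂ))).det := by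
    have hWt : W = Matrix.transpose (Matrix.vandermonde (fun i : Fin n =>
        (X i : MvPolynomial (Fin n) ℂ))) := rfl
    rw [hWt, Matrix.det_transpose]
  have hdetM : M.det ≠ 0 := by
    have hMeq : M = Matrix.of (fun k i0 : Fin n =>
        MvPolynomial.C (l i0) * (MvPolynomial.C (((k : ℕ) + 1 : ℂ)) * W k i0)) := by
      rw [← Matrix.ext_iff]
      intro k i0
      rw [hM]
      show pderiv i0 (wps l k) = _
      rw [hpd k i0, map_mul]
      show _ = MvPolynomial.C (l i0) * (MvPolynomial.C ((k : ℕ) + 1 : ℂ) * W k i0)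
      rw [hW]
      show _ = MvPolynomial.C (l i0) * (MvPolynomial.C ((k : ℕ) + 1 : ℂ) * X i0 ^ (k : ℕ))
      ring
    have h1 : (Matrix.of fun k i0 : Fin n =>
        MvPolynomial.C (((k : ℕ) + 1 : ℂ)) * W k i0).det
        = (∏ k : Fin n, MvPolynomial.C (((k : ℕ) + 1 : ℂ))) * W.det :=
      Matrix.det_mul_column _ _
    have h2 : M.det = (∏ i, MvPolynomial.C (l i))
        * (Matrix.of fun k i0 : Fin n =>
            MvPolynomial.C (((k : ℕ) + 1 : ℂ)) * W k i0).det := by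
      rw [hMeq]
      exact Matrix.det_mul_row _ _
    rw [h2, h1, hdetW, Matrix.det_vandermonde]
    refine mul_ne_zero ?_ (mul_ne_zero ?_ ?_)
    · refine Finset.prod_ne_zero_iff.mpr fun i _ => ?_
      simpa using hl0 i
    · refine Finset.prod_ne_zero_iff.mpr fun k _ => ?_
      intro hzero
      have : ((k : ℕ) + 1 : ℂ) = 0 := by
        simpa using (MvPolynomial.C_injective (Fin n) ℂ) (by simpa using hzero)
      exact_mod_cast Nat.cast_add_one_ne_zero (k : ℕ) this
    · refine Finset.prod_ne_zero_iff.mpr fun j _ => ?_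
      refine Finset.prod_ne_zero_iff.mpr fun i hi => ?_
      have hij : i ≠ j := (Finset.mem_Ioi.mp hi).ne'
      intro hzero
      rw [sub_eq_zero] at hzero
      have := congrArg (coeff (Finsupp.single i 1)) hzero
      rw [MvPolynomial.coeff_X', MvPolynomial.coeff_X', if_pos rfl,
        if_neg (fun hc => hij (Finsupp.single_left_injective one_ne_zero hc).symm)] at this
      exact one_ne_zero this
  intro t
  induction t using Nat.strong_induction_on with
  | _ t IH =>
    intro F hdeg h0
    have hker : ∀ k : Fin n, aeval (wps l) (pderiv k F) = 0 := by
      have hlin : ∀ i0 : Fin n,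
          ∑ k, aeval (wps l) (pderiv k F) * M k i0 = 0 := by
        intro i0
        have := pderiv_aeval (wps l) F i0
        rw [h0, map_zero] at this
        exact this.symm
      -- move to the fraction field
      set K := FractionRing (MvPolynomial (Fin n) ℂ) with hK
      set φ := algebraMap (MvPolynomial (Fin n) ℂ) K with hφ
      have hφinj : Function.Injective φ := IsFractionRing.injective _ _
      set v : Fin n → K := fun k => φ (aeval (wps l) (pderiv k F)) with hv
      set M' : Matrix (Fin n) (Fin n) K := M.map φ with hM'
      have hvM : Matrix.vecMul v M' = 0 := by
        funext i0
        show ∑ k, v k * M' k i0 = 0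
        rw [show ∑ k, v k * M' k i0 = φ (∑ k, aeval (wps l) (pderiv k F) * M k i0) by
          rw [map_sum]
          exact Finset.sum_congr rfl fun k _ => (map_mul φ _ _).symm]
        rw [hlin i0, map_zero]
      have hdet' : IsUnit M'.det := by
        rw [hM', show M.map ⇑φ = φ.mapMatrix M from (RingHom.mapMatrix_apply φ M).symm,
          ← RingHom.map_det]
        refine isUnit_iff_ne_zero.mpr fun hc => hdetM ?_
        exact hφinj (by rw [hc, map_zero])
      have hv0 : v = 0 := by
        letI := M'.invertibleOfIsUnitDet hdet'
        calc v = Matrix.vecMul v (M' * ⅟M') := by rw [mul_invOf_self, Matrix.vecMul_one]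
          _ = Matrix.vecMul (Matrix.vecMul v M') ⅟M' := by rw [Matrix.vecMul_vecMul]
          _ = 0 := by rw [hvM, Matrix.zero_vecMul]
      intro k
      have := congrFun hv0 k
      exact hφinj (by simpa [hv] using this)
    rcases Nat.eq_zero_or_pos t with rfl | ht
    · have hF0 : F.totalDegree = 0 := Nat.le_zero.mp hdeg
      have hFC := eq_C_of_totalDegree_eq_zero hF0
      rw [hFC] at h0 ⊢
      rw [aeval_C] at h0
      have : coeff 0 F = 0 := by
        simpa using h0
      rw [this, map_zero]
    · have hpz : ∀ k, pderiv k F = 0 := by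
        intro k
        exact IH (t - 1) (by omega) _
          (totalDegree_pderiv_le k F (by omega : F.totalDegree ≤ (t - 1) + 1)) (hker k)
      have hFC := eq_C_of_pderiv_eq_zero F hpz
      rw [hFC] at h0 ⊢
      rw [aeval_C] at h0
      have : coeff 0 F = 0 := by
        simpa using h0
      rw [this, map_zero]

private lemma homogeneousComponent_mul_isHomogeneous {e j : ℕ}
    (g q : MvPolynomial (Fin n) ℂ) (hq : q.IsHomogeneous e) :
    homogeneousComponent (j + e) (g * q) = homogeneousComponent j g * q := by
  classical
  conv_lhs => rw [← sum_homogeneousComponent g, Finset.sum_mul, map_sum]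
  have hterm : ∀ i0 ∈ Finset.range (g.totalDegree + 1),
      homogeneousComponent (j + e) (homogeneousComponent i0 g * q)
      = if i0 = j then homogeneousComponent i0 g * q else 0 := by
    intro i0 _
    rw [homogeneousComponent_of_mem ((mem_homogeneousSubmodule _ _).mpr
      ((homogeneousComponent_isHomogeneous i0 g).mul hq))]
    by_cases h : i0 = j
    · subst h
      rw [if_pos rfl, if_pos rfl]
    · rw [if_neg (fun hc => h (by omega)), if_neg h]
  rw [Finset.sum_congr rfl hterm, Finset.sum_ite_eq' (Finset.range (g.totalDegree + 1)) j
    (fun i0 => homogeneousComponent i0 g * q)]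
  by_cases hj : j ∈ Finset.range (g.totalDegree + 1)
  · rw [if_pos hj]
  · rw [if_neg hj]
    have : homogeneousComponent j g = 0 := by
      apply homogeneousComponent_eq_zero
      have := Finset.mem_range.not.mp hj
      omega
    rw [this, zero_mul]

private lemma wps_integral (l : Fin n → ℂ)
    (hl : ∀ I : Finset (Fin n), I.Nonempty → ∑ i ∈ I, l i ≠ 0) :
    Algebra.IsIntegral (Algebra.adjoin ℂ (Set.range (wps l)))
      (MvPolynomial (Fin n) ℂ) := by
  classical
  set J : Ideal (MvPolynomial (Fin n) ℂ) := Ideal.span (Set.range (wps l)) with hJ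
  -- every variable is in the radical of J
  have hrad : ∀ i : Fin n, (X i : MvPolynomial (Fin n) ℂ) ∈ J.radical := by
    intro i
    rw [← MvPolynomial.vanishingIdeal_zeroLocus_eq_radical (K := ℂ)]
    rw [MvPolynomial.mem_vanishingIdeal_iff]
    intro x hx
    have hx0 : x = 0 := by
      refine vand_zero l hl x fun k => ?_
      have := hx (wps l k) (Ideal.subset_span ⟨k, rfl⟩)
      rwa [show aeval x (wps l k) = eval x (wps l k) from rfl, eval_wps] at this
    rw [hx0]
    simp
  -- a uniform exponent
  have hex : ∀ i : Fin n, ∃ N, (X i : MvPolynomial (Fin n) ℂ) ^ N ∈ J := by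
    intro i
    exact hrad i
  choose Nf hNf using hex
  set N : ℕ := (Finset.univ.sup Nf) + 1 with hN
  have hXN : ∀ i : Fin n, (X i : MvPolynomial (Fin n) ℂ) ^ N ∈ J := by
    intro i
    have hle : Nf i ≤ N := le_trans (Finset.le_sup (Finset.mem_univ i)) (Nat.le_succ _)
    have : (X i : MvPolynomial (Fin n) ℂ) ^ N
        = X i ^ (N - Nf i) * X i ^ Nf i := by
      rw [← pow_add]
      congr 1
      omega
    rw [this]
    exact Ideal.mul_mem_left _ _ (hNf i)
  set D : ℕ := n * N with hD
  set B := Algebra.adjoin ℂ (Set.range (wps l)) with hB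
  -- the generating monomials
  set T : Finset (MvPolynomial (Fin n) ℂ) :=
    (((Finsupp.finite_of_degree_le (σ := Fin n) D).image
      (fun α => (monomial α (1 : ℂ))))).toFinset with hT
  have hmemT : ∀ α : Fin n →₀ ℕ, α.degree ≤ D → monomial α (1 : ℂ) ∈ T := by
    intro α hα
    rw [hT, Set.Finite.mem_toFinset]
    exact ⟨α, hα, rfl⟩
  -- main claim by strong induction on the total degree
  have main : ∀ t : ℕ, ∀ f : MvPolynomial (Fin n) ℂ, f.totalDegree ≤ t →
      f ∈ Submodule.span B (T : Set (MvPolynomial (Fin n) ℂ)) := by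
    intro t
    induction t using Nat.strong_induction_on with
    | _ t IH =>
      intro f hf
      rw [f.as_sum]
      refine Submodule.sum_mem _ fun m hm => ?_
      have hmdeg : m.degree ≤ t := by
        refine le_trans ?_ (le_trans (MvPolynomial.le_totalDegree hm) hf)
        exact le_of_eq rfl
      by_cases hdm : m.degree ≤ D
      · -- small-degree monomial
        have h1 : monomial m (coeff m f)
            = (⟨MvPolynomial.C (coeff m f), Subalgebra.algebraMap_mem B (coeff m f)⟩ : B)
              • monomial m (1 : ℂ) := by
          rw [Algebra.smul_def]
          show monomial m (coeff m f) = MvPolynomial.C (coeff m f) * monomial m 1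
          rw [MvPolynomial.C_mul_monomial, mul_one]
        rw [h1]
        exact Submodule.smul_mem _ _ (Submodule.subset_span (hmemT m hdm))
      · -- large-degree monomial
        push_neg at hdm
        have hn0 : 0 < n := by
          rcases Nat.eq_zero_or_pos n with h0 | h1
          · exfalso
            subst h0
            have : m = 0 := Subsingleton.elim m 0
            rw [this] at hdm
            simp at hdm
          · exact h1
        -- find a variable with large exponent
        have hex2 : ∃ i, N ≤ m i := by
          by_contra hc
          push_neg at hc
          have : m.degree ≤ n * (N - 1) := by
            rw [Finsupp.degree]
            calc ∑ i ∈ m.support, m i ≤ ∑ i ∈ m.support, (N - 1) :=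
                  Finset.sum_le_sum fun i _ => by have := hc i; omega
              _ = m.support.card * (N - 1) := by
                  rw [Finset.sum_const, smul_eq_mul]
              _ ≤ n * (N - 1) := by
                  have : m.support.card ≤ n := by
                    have := Finset.card_le_univ m.support
                    simpa using this
                  exact Nat.mul_le_mul_right _ this
          have hN1 : 1 ≤ N := by omega
          have : m.degree ≤ n * N - n := by
            have := Nat.mul_le_mul_left n (Nat.sub_le N 1)
            omega
          omega
        obtain ⟨i, hNi⟩ := hex2
        -- representation of X i ^ N
        obtain ⟨h, hh⟩ := Ideal.mem_span_range_iff_exists_fun.mp (hXN i)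
        -- monomial m c = monomial (m - N e_i) c * X i ^ N
        have hsplit : monomial m (coeff m f)
            = monomial (m - Finsupp.single i N) (coeff m f) * (X i) ^ N := by
          have hfs : (m - Finsupp.single i N) + Finsupp.single i N = m := by
            ext j
            rw [Finsupp.add_apply, Finsupp.tsub_apply]
            by_cases hj : j = i
            · subst hj
              simp [Finsupp.single_apply]
              omega
            · simp [Finsupp.single_apply, Ne.symm hj]
          rw [MvPolynomial.X_pow_eq_monomial, MvPolynomial.monomial_mul, mul_one, hfs]
        have hrepr : monomial m (coeff m f)
            = ∑ k : Fin n, (monomial (m - Finsupp.single i N) (coeff m f) * h k) * wps l k := by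
          rw [hsplit, ← hh, Finset.mul_sum]
          exact Finset.sum_congr rfl fun k _ => by ring
        -- extract homogeneous components
        have hdm1 : ∀ k : Fin n, ((k : ℕ) + 1) ≤ m.degree := by
          intro k
          have : (k : ℕ) + 1 ≤ n := k.2
          have : n ≤ n * N := Nat.le_mul_of_pos_right n (by omega)
          omega
        have hmono : monomial m (coeff m f)
            = ∑ k : Fin n, homogeneousComponent (m.degree - ((k : ℕ) + 1))
                (monomial (m - Finsupp.single i N) (coeff m f) * h k) * wps l k := by
          have hhom : (monomial m (coeff m f)).IsHomogeneous m.degree :=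
            isHomogeneous_monomial _ rfl
          calc monomial m (coeff m f)
              = homogeneousComponent m.degree (monomial m (coeff m f)) := by
                rw [homogeneousComponent_of_mem ((mem_homogeneousSubmodule _ _).mpr hhom),
                  if_pos rfl]
            _ = homogeneousComponent m.degree
                (∑ k : Fin n, (monomial (m - Finsupp.single i N) (coeff m f) * h k) * wps l k) := by
                rw [← hrepr]
            _ = ∑ k : Fin n, homogeneousComponent (m.degree - ((k : ℕ) + 1))
                (monomial (m - Finsupp.single i N) (coeff m f) * h k) * wps l k := by
                rw [map_sum]
                refine Finset.sum_congr rfl fun k _ => ?_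
                have hdeg : m.degree = (m.degree - ((k : ℕ) + 1)) + ((k : ℕ) + 1) := by
                  have := hdm1 k
                  omega
                conv_lhs => rw [hdeg]
                exact homogeneousComponent_mul_isHomogeneous _ _ (wps_isHomogeneous l k)
        rw [hmono]
        refine Submodule.sum_mem _ fun k _ => ?_
        have hsmall : (homogeneousComponent (m.degree - ((k : ℕ) + 1))
            (monomial (m - Finsupp.single i N) (coeff m f) * h k)).totalDegree
            < t := by
          have h1 := (homogeneousComponent_isHomogeneous (m.degree - ((k : ℕ) + 1))
            (monomial (m - Finsupp.single i N) (coeff m f) * h k)).totalDegree_le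
          have h2 := hdm1 k
          omega
        have hc : homogeneousComponent (m.degree - ((k : ℕ) + 1))
            (monomial (m - Finsupp.single i N) (coeff m f) * h k)
            ∈ Submodule.span B (T : Set (MvPolynomial (Fin n) ℂ)) := by
          rcases Nat.eq_zero_or_pos t with rfl | ht
          · omega
          · exact IH (t - 1) (by omega) _ (by omega)
        have heq : homogeneousComponent (m.degree - ((k : ℕ) + 1))
              (monomial (m - Finsupp.single i N) (coeff m f) * h k) * wps l k
            = (⟨wps l k, Algebra.subset_adjoin (Set.mem_range_self k)⟩ : B)
              • homogeneousComponent (m.degree - ((k : ℕ) + 1))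
                (monomial (m - Finsupp.single i N) (coeff m f) * h k) := by
          rw [Algebra.smul_def]
          show _ = wps l k * _
          ring
        rw [heq]
        exact Submodule.smul_mem _ _ hc
  have hfin : Module.Finite B (MvPolynomial (Fin n) ℂ) := by
    refine ⟨⟨T, ?_⟩⟩
    rw [eq_top_iff]
    intro f _
    exact main f.totalDegree f le_rfl
  exact Algebra.IsIntegral.of_finite B (MvPolynomial (Fin n) ℂ)

/-- key surjectivity result -/
private lemma key_surj (l : Fin n → ℂ)
    (hl : ∀ I : Finset (Fin n), I.Nonempty → ∑ i ∈ I, l i ≠ 0)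
    (c : Fin n → ℂ) :
    ∃ r : Fin n → ℂ, ∀ k : Fin n, ∑ i, l i * r i ^ ((k : ℕ) + 1) = c k := by
  have hl0 : ∀ i, l i ≠ 0 := by
    intro i
    simpa using hl {i} ⟨i, Finset.mem_singleton_self i⟩
  have hint := wps_integral l hl
  have hind : AlgebraicIndependent ℂ (wps l) := wps_indep l hl0
  set B := Algebra.adjoin ℂ (Set.range (wps l)) with hB
  let χ : B →ₐ[ℂ] ℂ := (aeval c).comp hind.aevalEquiv.symm.toAlgHom
  let b : Fin n → B := fun k => hind.aevalEquiv (X k) - algebraMap ℂ B (c k)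
  have hbval : ∀ k, algebraMap B (MvPolynomial (Fin n) ℂ) (b k)
      = wps l k - MvPolynomial.C (c k) := by
    intro k
    simp only [b, map_sub]
    rw [hind.algebraMap_aevalEquiv]
    simp [MvPolynomial.algebraMap_eq, ← IsScalarTower.algebraMap_apply]
  have hbker : ∀ k, χ (b k) = 0 := by
    intro k
    simp only [χ, b, map_sub, AlgHom.comp_apply, AlgEquiv.coe_algHom,
      AlgEquiv.symm_apply_apply, AlgHom.commutes]
    simp
  set JB : Ideal B := Ideal.span (Set.range b) with hJB
  have hJBne : JB ≠ ⊤ := by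
    intro htop
    have h1 : (1 : B) ∈ JB := htop ▸ Submodule.mem_top
    have hle : JB ≤ RingHom.ker (χ : B →+* ℂ) := by
      rw [hJB, Ideal.span_le]
      rintro _ ⟨k, rfl⟩
      exact hbker k
    have := hle h1
    rw [RingHom.mem_ker] at this
    simp at this
  set I : Ideal (MvPolynomial (Fin n) ℂ) :=
    Ideal.map (algebraMap B (MvPolynomial (Fin n) ℂ)) JB with hI
  have hine : I ≠ ⊤ := fun htop => hJBne
    ((Ideal.map_eq_top_iff _ (fun x y h => Subtype.ext h)
      (Algebra.isIntegral_def.mp hint)).mp htop)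
  have hzl : (MvPolynomial.zeroLocus ℂ I).Nonempty := by
    by_contra hempty
    rw [Set.not_nonempty_iff_eq_empty] at hempty
    have : MvPolynomial.vanishingIdeal ℂ (MvPolynomial.zeroLocus ℂ I) = ⊤ := by
      rw [hempty]; exact MvPolynomial.vanishingIdeal_empty
    rw [MvPolynomial.vanishingIdeal_zeroLocus_eq_radical, Ideal.radical_eq_top] at this
    exact hine this
  obtain ⟨x, hx⟩ := hzl
  refine ⟨x, fun k => ?_⟩
  have hmem : wps l k - MvPolynomial.C (c k) ∈ I := by
    rw [← hbval k]
    exact Ideal.mem_map_of_mem _ (Ideal.subset_span ⟨k, rfl⟩)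
  have := hx _ hmem
  rw [map_sub, show aeval x (wps l k) = eval x (wps l k) from rfl, eval_wps, aeval_C, sub_eq_zero] at this
  exact this

end AuxPS

theorem stmt_0 (d : ℕ) (hd : 2 ≤ d) (l : Fin (d - 1) → ℂ)
    (hl : ∀ I : Finset (Fin (d - 1)), I.Nonempty → ∑ i ∈ I, l i ≠ 0)
    (P : PowerSeries ℂ) (hP : PowerSeries.constantCoeff P = ∑ i, l i) :
    ∃ r : Fin (d - 1) → ℂ,
      (PowerSeries.X : PowerSeries ℂ) ^ d ∣
        P - ∑ i, PowerSeries.C (l i) * PowerSeries.rescale (r i) (PowerSeries.exp ℂ) := by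
  obtain ⟨r, hr⟩ := key_surj l hl
    (fun k => (Nat.factorial ((k : ℕ) + 1) : ℂ) * PowerSeries.coeff ((k : ℕ) + 1) P)
  refine ⟨r, ?_⟩
  rw [PowerSeries.X_pow_dvd_iff]
  intro m hm
  rw [map_sub, map_sum]
  have hcoeff : ∀ i, (PowerSeries.coeff m)
      (PowerSeries.C (l i) * PowerSeries.rescale (r i) (PowerSeries.exp ℂ))
      = l i * r i ^ m * ((Nat.factorial m : ℂ))⁻¹ := by
    intro i
    rw [PowerSeries.coeff_C_mul, PowerSeries.coeff_rescale, PowerSeries.coeff_exp]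
    push_cast
    ring
  rw [Finset.sum_congr rfl (fun i _ => hcoeff i), ← Finset.sum_mul]
  have hfac : ((Nat.factorial m : ℂ)) ≠ 0 := by
    exact_mod_cast (Nat.factorial_pos m).ne'
  rcases Nat.eq_zero_or_pos m with hm0 | hmpos
  · subst hm0
    simp only [pow_zero, mul_one, Nat.factorial_zero, Nat.cast_one, inv_one]
    rw [PowerSeries.coeff_zero_eq_constantCoeff, hP]
    ring
  · have hj : m - 1 < d - 1 := by omega
    have hE := hr ⟨m - 1, hj⟩
    simp only [Fin.val_mk] at hE
    have hm1 : m - 1 + 1 = m := by omega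
    rw [hm1] at hE
    rw [hE]
    field_simp
    ring
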